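/- arXiv:1809.04948 — 2 statements merged into one kernel-verified Lean document; each statement's English description precedes it below -/
import Mathlib

section
/- The function χ(t) = (t² csch(t) / f(t))² for t > 0 extends continuously to t = 0 with χ(0) = 3, and χ is continuous and positive on [0,∞). -/
/-- `χ(t) = (t² csch t / f(t))² = t⁴ csch²(t) / (1 - t² csch²(t))` for `t > 0`,
extended by `χ(0) = 3`. -/
noncomputable def kacChi (t : ℝ) : ℝ :=
  if t = 0 then 3
  else (t ^ 4 / (Real.sinh t) ^ 2) / (1 - t ^ 2 / (Real.sinh t) ^ 2)

open Real Filter Set Topology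


lemma sinh_approx {t : ℝ} (ht : |t| ≤ 1) :
    |Real.sinh t - (t + t ^ 3 / 6)| ≤ |t| ^ 5 / 100 := by
  have hA := Real.exp_bound ht (n := 5) (by norm_num)
  have ht' : |(-t)| ≤ 1 := by rwa [abs_neg]
  have hB := Real.exp_bound ht' (n := 5) (by norm_num)
  have hS : ∀ x : ℝ, ∑ m ∈ Finset.range 5, x ^ m / m.factorial
      = 1 + x + x ^ 2 / 2 + x ^ 3 / 6 + x ^ 4 / 24 := by
    intro x
    norm_num [Finset.sum_range_succ, Nat.factorial]
  rw [hS] at hA hB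
  rw [abs_neg] at hB
  have heq : Real.sinh t - (t + t ^ 3 / 6) =
      ((Real.exp t - (1 + t + t ^ 2 / 2 + t ^ 3 / 6 + t ^ 4 / 24))
       - (Real.exp (-t) - (1 + (-t) + (-t) ^ 2 / 2 + (-t) ^ 3 / 6 + (-t) ^ 4 / 24))) / 2 := by
    rw [Real.sinh_eq]; ring
  rw [heq]
  norm_num [Nat.factorial] at hA hB
  have h1 := abs_le.mp hA
  have h2 := abs_le.mp hB
  rw [abs_le]
  ring_nf at h1 h2 ⊢; constructor <;> nlinarith [h1.1, h1.2, h2.1, h2.2]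

lemma sinh_gt {t : ℝ} (ht : 0 < t) : t < Real.sinh t := Real.self_lt_sinh_iff.mpr ht

lemma kacChi_formula {t : ℝ} (ht : 0 < t) :
    kacChi t = (t ^ 3 / (Real.sinh t - t)) * (t / (Real.sinh t + t)) := by
  have h1 : t < Real.sinh t := sinh_gt ht
  rw [kacChi, if_neg ht.ne']
  have hs : Real.sinh t ≠ 0 := by positivity
  have h2 : Real.sinh t - t ≠ 0 := by linarith
  have h3 : Real.sinh t + t ≠ 0 := by positivity
  have h4 : Real.sinh t ^ 2 - t ^ 2 ≠ 0 := by nlinarith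
  field_simp
  ring

lemma tendsto_sinh_div : Filter.Tendsto (fun t => Real.sinh t / t) (𝓝[>] 0) (𝓝 1) := by
  have h := (Real.hasDerivAt_sinh 0).tendsto_slope_zero_right
  simp only [zero_add, Real.sinh_zero, sub_zero, Real.cosh_zero, smul_eq_mul] at h
  exact h.congr fun t => (div_eq_inv_mul _ _).symm

lemma tendsto_g : Filter.Tendsto (fun t => (Real.sinh t - t) / t ^ 3) (𝓝[>] 0) (𝓝 (1/6)) := by
  have key : Filter.Tendsto (fun t => (Real.sinh t - t) / t ^ 3 - 1/6) (𝓝[>] 0) (𝓝 0) := by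
    apply squeeze_zero_norm' (a := fun t => t ^ 2 / 100)
    · filter_upwards [Ioo_mem_nhdsGT (by norm_num : (0:ℝ) < 1)] with t ht
      obtain ⟨ht0, ht1⟩ := ht
      have habs : |t| ≤ 1 := by rw [abs_of_pos ht0]; linarith
      have := sinh_approx habs
      rw [abs_of_pos ht0] at this
      have heq : (Real.sinh t - t) / t ^ 3 - 1/6 = (Real.sinh t - (t + t ^ 3 / 6)) / t ^ 3 := by
        field_simp
        ring
      rw [Real.norm_eq_abs, heq, abs_div, abs_of_pos (by positivity : (0:ℝ) < t ^ 3)]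
      rw [div_le_div_iff₀ (by positivity) (by norm_num)]
      nlinarith
    · have : Filter.Tendsto (fun t : ℝ => t ^ 2 / 100) (𝓝 0) (𝓝 0) := by
        have := (continuous_pow 2).div_const (100:ℝ)
        simpa using this.tendsto 0
      exact this.mono_left nhdsWithin_le_nhds
  have := key.add (tendsto_const_nhds (x := (1:ℝ)/6))
  simpa using this

lemma tendsto_kacChi : Filter.Tendsto kacChi (𝓝[>] 0) (𝓝 3) := by
  have h1 : Filter.Tendsto (fun t => t ^ 3 / (Real.sinh t - t)) (𝓝[>] 0) (𝓝 6) := by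
    have := tendsto_g.inv₀ (by norm_num)
    simp only [inv_div] at this
    convert this using 2
    norm_num
  have h2 : Filter.Tendsto (fun t => t / (Real.sinh t + t)) (𝓝[>] 0) (𝓝 (1/2)) := by
    have hsum : Filter.Tendsto (fun t => (Real.sinh t + t) / t) (𝓝[>] 0) (𝓝 2) := by
      have := tendsto_sinh_div.add (tendsto_const_nhds (x := (1:ℝ)))
      apply Filter.Tendsto.congr' _ (by norm_num at this ⊢; exact this)
      filter_upwards [self_mem_nhdsWithin] with t (ht : 0 < t)
      field_simp
    have := hsum.inv₀ (by norm_num)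
    simp only [inv_div] at this
    convert this using 2
    norm_num
  have := h1.mul h2
  norm_num at this
  apply Filter.Tendsto.congr' _ this
  filter_upwards [self_mem_nhdsWithin] with t (ht : 0 < t)
  exact (kacChi_formula ht).symm

lemma kacChi_pos {t : ℝ} (ht : 0 ≤ t) : 0 < kacChi t := by
  rcases eq_or_lt_of_le ht with h | h
  · simp [kacChi, ← h]
  · have h1 : t < Real.sinh t := sinh_gt h
    rw [kacChi, if_neg h.ne']
    have hs : (0:ℝ) < Real.sinh t := lt_trans h h1
    apply div_pos (by positivity)
    rw [sub_pos, div_lt_one (by positivity)]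
    nlinarith

lemma kacChi_contAt {x : ℝ} (hx : 0 < x) : ContinuousAt kacChi x := by
  have h1 : x < Real.sinh x := sinh_gt hx
  have hs : (0:ℝ) < Real.sinh x := lt_trans hx h1
  have hden : 1 - x ^ 2 / Real.sinh x ^ 2 ≠ 0 := by
    have : x ^ 2 / Real.sinh x ^ 2 < 1 := by
      rw [div_lt_one (by positivity)]; nlinarith
    linarith
  have hc : ContinuousAt (fun t => (t ^ 4 / (Real.sinh t) ^ 2) / (1 - t ^ 2 / (Real.sinh t) ^ 2)) x := by
    apply ContinuousAt.div
    · exact (continuousAt_pow x 4).div (Real.continuous_sinh.continuousAt.pow 2) (by positivity)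
    · exact continuousAt_const.sub ((continuousAt_pow x 2).div
        (Real.continuous_sinh.continuousAt.pow 2) (by positivity))
    · exact hden
  apply hc.congr
  filter_upwards [isOpen_Ioi.mem_nhds hx] with t (ht : 0 < t)
  rw [kacChi, if_neg ht.ne']

/-- `χ` extends continuously to `t = 0` with value `3`, and is
continuous and positive on `[0,∞)`. -/
theorem stmt5 :
    ContinuousOn kacChi (Set.Ici 0) ∧ (∀ t : ℝ, 0 ≤ t → 0 < kacChi t) := by
  refine ⟨?_, fun t ht => kacChi_pos ht⟩
  intro x hx
  rcases eq_or_lt_of_le (Set.mem_Ici.mp hx : (0:ℝ) ≤ x) with h | h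
  · subst h
    rw [← continuousWithinAt_Ioi_iff_Ici]
    unfold ContinuousWithinAt
    have h0 : kacChi 0 = 3 := by simp [kacChi]
    rw [h0]
    exact tendsto_kacChi
  · exact (kacChi_contAt h).continuousWithinAt
end

section
/- For every p ≥ 1, Σ_{k=1}^{p} ((-2)^k / k!) Σ_{j₁+⋯+j_k = p, j_i ≥ 1} n(j₁,…,j_k)/(j₁ ⋯ j_k) equals -2 if p = 1, 4 if p = 2, -2 if p = 3, and 0 if p ≥ 4, where n(j₁,…,j_k) is the number of indices i with j_i = 1. -/
open List Finset

namespace Stmt14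

noncomputable def P (l : List ℕ) : ℝ := (l.map (fun j : ℕ => (j : ℝ))).prod

lemma P_nil : P [] = 1 := by simp [P]

lemma P_cons (a : ℕ) (l : List ℕ) : P (a :: l) = a * P l := by simp [P]

lemma P_pos {l : List ℕ} (h : ∀ x ∈ l, 0 < x) : 0 < P l := by
  induction l with
  | nil => simp [P_nil]
  | cons a t ih =>
    rw [P_cons]
    have := h a (by simp)
    exact mul_pos (by exact_mod_cast this) (ih fun x hx => h x (by simp [hx]))

lemma P_insertIdx : ∀ (l : List ℕ) (n : ℕ), n ≤ l.length → ∀ a : ℕ,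
    P (l.insertIdx n a) = a * P l := by
  intro l
  induction l with
  | nil => intro n hn a; obtain rfl := Nat.le_zero.mp hn; simp [P_cons]
  | cons b t ih =>
    intro n hn a
    cases n with
    | zero => simp [P_cons]
    | succ m =>
      rw [insertIdx_succ_cons, P_cons, P_cons, ih m (by simpa using hn) a]
      ring

lemma sum_insertIdx' : ∀ (l : List ℕ) (n : ℕ), n ≤ l.length → ∀ a : ℕ,
    (l.insertIdx n a).sum = a + l.sum := by
  intro l
  induction l with
  | nil => intro n hn a; obtain rfl := Nat.le_zero.mp hn; simp
  | cons b t ih =>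
    intro n hn a
    cases n with
    | zero => simp
    | succ m =>
      rw [insertIdx_succ_cons, List.sum_cons, List.sum_cons, ih m (by simpa using hn) a]
      ring

lemma insertIdx_eraseIdx_self : ∀ (l : List ℕ) (i : ℕ), i < l.length →
    (l.eraseIdx i).insertIdx i (l.getD i 0) = l := by
  intro l
  induction l with
  | nil => intro i hi; simp at hi
  | cons b t ih =>
    intro i hi
    cases i with
    | zero => simp
    | succ m =>
      simp only [List.eraseIdx_cons_succ, List.getD_cons_succ, insertIdx_succ_cons]
      rw [ih m (by simpa using hi)]

lemma set_eq_insert_erase : ∀ (l : List ℕ) (i : ℕ), i < l.length → ∀ a : ℕ,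
    l.set i a = (l.eraseIdx i).insertIdx i a := by
  intro l
  induction l with
  | nil => intro i hi; simp at hi
  | cons b t ih =>
    intro i hi a
    cases i with
    | zero => simp
    | succ m =>
      simp only [List.set_cons_succ, List.eraseIdx_cons_succ, insertIdx_succ_cons]
      rw [ih m (by simpa using hi)]

lemma sum_eraseIdx (l : List ℕ) (i : ℕ) (hi : i < l.length) :
    (l.eraseIdx i).sum + l.getD i 0 = l.sum := by
  conv_rhs => rw [← insertIdx_eraseIdx_self l i hi]
  rw [sum_insertIdx' _ i (by rw [List.length_eraseIdx, if_pos hi]; omega) _]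
  ring

lemma P_eraseIdx (l : List ℕ) (i : ℕ) (hi : i < l.length) :
    P l = (l.getD i 0 : ℝ) * P (l.eraseIdx i) := by
  conv_lhs => rw [← insertIdx_eraseIdx_self l i hi]
  rw [P_insertIdx _ i (by rw [List.length_eraseIdx, if_pos hi]; omega)]

lemma count_getD : ∀ (l : List ℕ) (a : ℕ),
    l.count a = ∑ i ∈ range l.length, if l.getD i 0 = a then 1 else 0 := by
  intro l
  induction l with
  | nil => simp
  | cons b t ih =>
    intro a
    rw [List.length_cons, Finset.sum_range_succ']
    simp only [List.getD_cons_succ, List.getD_cons_zero, List.count_cons, ih a]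
    simp only [beq_iff_eq]

lemma sum_getD : ∀ (l : List ℕ),
    l.sum = ∑ i ∈ range l.length, l.getD i 0 := by
  intro l
  induction l with
  | nil => simp
  | cons b t ih =>
    rw [List.length_cons, Finset.sum_range_succ']
    simp only [List.getD_cons_succ, List.getD_cons_zero, List.sum_cons, ih]
    ring

/-- The weight of a composition's block list. -/
noncomputable def w (l : List ℕ) : ℝ :=
  (-2 : ℝ) ^ l.length / (Nat.factorial l.length : ℝ) / P l

noncomputable def U (q : ℕ) : ℝ := ∑ c : Composition q, w c.blocks

/-- helper cancel lemma -/
lemma cancel (a X Pe : ℝ) (ha : a ≠ 0) : a * (X / (a * Pe)) = X / Pe := by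
  rw [mul_div_assoc', mul_div_mul_left X Pe ha]

/-! ### Composition constructors -/

def insC {q : ℕ} (c : Composition q) (i : ℕ) (h : i ≤ c.length) : Composition (q + 1) :=
  ⟨c.blocks.insertIdx i 1,
   fun {x} hx => by
     rcases (List.mem_insertIdx h).mp hx with rfl | hx
     · exact one_pos
     · exact c.blocks_pos hx,
   by rw [sum_insertIdx' _ i h, c.blocks_sum]; omega⟩

lemma insC_blocks {q : ℕ} (c : Composition q) (i : ℕ) (h : i ≤ c.length) :
    (insC c i h).blocks = c.blocks.insertIdx i 1 := rfl

lemma insC_length {q : ℕ} (c : Composition q) (i : ℕ) (h : i ≤ c.length) :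
    (insC c i h).length = c.length + 1 := by
  simp [Composition.length, insC_blocks, List.length_insertIdx_of_le_length h]

def delC {q : ℕ} (c : Composition (q + 1)) (i : ℕ) (h : i < c.length)
    (h1 : c.blocks.getD i 0 = 1) : Composition q :=
  ⟨c.blocks.eraseIdx i,
   fun {x} hx => c.blocks_pos (List.eraseIdx_subset hx),
   by have := sum_eraseIdx c.blocks i h; rw [h1, c.blocks_sum] at this; omega⟩

lemma delC_blocks {q : ℕ} (c : Composition (q + 1)) (i : ℕ) (h : i < c.length)
    (h1 : c.blocks.getD i 0 = 1) : (delC c i h h1).blocks = c.blocks.eraseIdx i := rfl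

lemma delC_length {q : ℕ} (c : Composition (q + 1)) (i : ℕ) (h : i < c.length)
    (h1 : c.blocks.getD i 0 = 1) : (delC c i h h1).length = c.length - 1 := by
  simp [Composition.length, delC_blocks, List.length_eraseIdx, h]

lemma getD_pos {q : ℕ} (c : Composition q) (i : ℕ) (h : i < c.blocks.length) :
    0 < c.blocks.getD i 0 := by
  rw [List.getD_eq_getElem _ _ h]
  exact c.blocks_pos (List.getElem_mem h)

set_option maxHeartbeats 1000000 in
lemma sumD1 (q : ℕ) :
    ∑ x ∈ ((univ : Finset (Composition (q+1))) ×ˢ Finset.range (q+1)).filter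
        (fun x : Composition (q+1) × ℕ =>
          x.2 < x.1.blocks.length ∧ x.1.blocks.getD x.2 0 = 1), w x.1.blocks
    = -2 * U q := by
  classical
  have key : ∑ x ∈ (univ ×ˢ Finset.range (q+1)).filter
        (fun x : Composition (q+1) × ℕ =>
          x.2 < x.1.blocks.length ∧ x.1.blocks.getD x.2 0 = 1), w x.1.blocks
      = ∑ x ∈ (univ ×ˢ Finset.range (q+1)).filter
        (fun x : Composition q × ℕ => x.2 ≤ x.1.blocks.length),
          (-2/((x.1.blocks.length : ℝ)+1)) * w x.1.blocks := by
    refine Finset.sum_bij'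
      (fun x hx => (delC x.1 x.2 ((Finset.mem_filter.mp hx).2).1 ((Finset.mem_filter.mp hx).2).2, x.2))
      (fun x hx => (insC x.1 x.2 ((Finset.mem_filter.mp hx).2), x.2)) ?_ ?_ ?_ ?_ ?_
    · intro x hx
      obtain ⟨hmem, hcond⟩ := Finset.mem_filter.mp hx
      obtain ⟨-, hrange⟩ := Finset.mem_product.mp hmem
      refine Finset.mem_filter.mpr ⟨Finset.mem_product.mpr ⟨Finset.mem_univ _, hrange⟩, ?_⟩
      show x.2 ≤ (delC x.1 x.2 hcond.1 hcond.2).blocks.length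
      rw [delC_blocks, List.length_eraseIdx, if_pos hcond.1]
      omega
    · intro x hx
      obtain ⟨hmem, hcond⟩ := Finset.mem_filter.mp hx
      obtain ⟨-, hrange⟩ := Finset.mem_product.mp hmem
      refine Finset.mem_filter.mpr ⟨Finset.mem_product.mpr ⟨Finset.mem_univ _, hrange⟩, ?_, ?_⟩
      · show x.2 < (insC x.1 x.2 hcond).blocks.length
        rw [insC_blocks, List.length_insertIdx_of_le_length hcond]
        omega
      · show (insC x.1 x.2 hcond).blocks.getD x.2 0 = 1
        rw [insC_blocks, List.getD_eq_getElem _ _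
            (by rw [List.length_insertIdx_of_le_length hcond]; omega),
          List.getElem_insertIdx_self]
    · intro x hx
      obtain ⟨hmem, hcond⟩ := Finset.mem_filter.mp hx
      refine Prod.ext ?_ rfl
      refine Composition.ext ?_
      rw [insC_blocks, delC_blocks]
      have h3 := insertIdx_eraseIdx_self x.1.blocks x.2 hcond.1
      rwa [hcond.2] at h3
    · intro x hx
      refine Prod.ext ?_ rfl
      refine Composition.ext ?_
      rw [delC_blocks, insC_blocks]
      exact List.eraseIdx_insertIdx_self _
    · intro x hx
      obtain ⟨hmem, hcond⟩ := Finset.mem_filter.mp hx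
      obtain ⟨hi, h1'⟩ := hcond
      set l := x.1.blocks with hl
      have hPl : P l = P (l.eraseIdx x.2) := by
        rw [P_eraseIdx l x.2 hi, h1']
        push_cast; ring
      rw [delC_blocks]
      rw [← hl]
      have hm : l.length = (l.length - 1) + 1 := by omega
      rw [w, w, hPl, List.length_eraseIdx, if_pos hi]
      rw [hm]
      set m := l.length - 1
      rw [pow_succ, Nat.factorial_succ]
      have hPe : P (l.eraseIdx x.2) ≠ 0 := by
        have : 0 < P (l.eraseIdx x.2) :=
          P_pos fun y hy => x.1.blocks_pos (List.eraseIdx_subset hy)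
        positivity
      have hf : (Nat.factorial m : ℝ) ≠ 0 := by positivity
      have hm1 : ((m:ℝ) + 1) ≠ 0 := by positivity
      push_cast
      field_simp
  rw [key, Finset.sum_filter]
  calc (∑ a ∈ ((univ : Finset (Composition q)) ×ˢ Finset.range (q+1)),
          if a.2 ≤ a.1.blocks.length then (-2/((a.1.blocks.length:ℝ)+1)) * w a.1.blocks else 0)
      = ∑ c' : Composition q, ∑ i ∈ Finset.range (q+1),
          (if i ≤ c'.blocks.length then (-2/((c'.blocks.length:ℝ)+1)) * w c'.blocks else 0) :=
        Finset.sum_product' (univ : Finset (Composition q)) (Finset.range (q+1))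
          (fun (c' : Composition q) (i : ℕ) => if i ≤ c'.blocks.length then (-2/((c'.blocks.length:ℝ)+1)) * w c'.blocks else 0)
    _ = -2 * U q := ?_
  have h2 : ∀ c' : Composition q,
      (∑ i ∈ Finset.range (q+1), if i ≤ c'.blocks.length
          then (-2/((c'.blocks.length:ℝ)+1)) * w c'.blocks else 0)
      = -2 * w c'.blocks := by
    intro c'
    have hle : c'.blocks.length ≤ q := c'.length_le
    rw [← Finset.sum_subset (Finset.range_subset_range.mpr (by omega : c'.blocks.length + 1 ≤ q + 1))
        (fun i _ hi => if_neg (by rw [Finset.mem_range] at hi; omega))]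
    calc (∑ i ∈ Finset.range (c'.blocks.length + 1), if i ≤ c'.blocks.length
            then (-2/((c'.blocks.length:ℝ)+1)) * w c'.blocks else 0)
        = ∑ _i ∈ Finset.range (c'.blocks.length + 1), (-2/((c'.blocks.length:ℝ)+1)) * w c'.blocks :=
          Finset.sum_congr rfl fun i hi => if_pos (by rw [Finset.mem_range] at hi; omega)
      _ = -2 * w c'.blocks := by
          rw [Finset.sum_const, Finset.card_range, nsmul_eq_mul]
          have hne : ((c'.blocks.length:ℝ)+1) ≠ 0 := by positivity
          push_cast
          field_simp
  rw [Finset.sum_congr rfl fun c' _ => h2 c', U, Finset.mul_sum]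

set_option maxHeartbeats 1000000 in
lemma sumA (q : ℕ) :
    ∑ c : Composition (q+1), (c.blocks.count 1 : ℝ) * w c.blocks = -2 * U q := by
  classical
  have h1 : ∀ c : Composition (q+1), (c.blocks.count 1 : ℝ) * w c.blocks
      = ∑ i ∈ range (q+1), if i < c.blocks.length ∧ c.blocks.getD i 0 = 1
          then w c.blocks else 0 := by
    intro c
    have hle : c.blocks.length ≤ q + 1 := c.length_le
    rw [count_getD]
    push_cast
    rw [Finset.sum_mul]
    calc (∑ i ∈ range c.blocks.length,
            (if c.blocks.getD i 0 = 1 then (1:ℝ) else 0) * w c.blocks)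
        = ∑ i ∈ range c.blocks.length,
            if i < c.blocks.length ∧ c.blocks.getD i 0 = 1 then w c.blocks else 0 := by
          refine Finset.sum_congr rfl fun i hi => ?_
          rw [Finset.mem_range] at hi
          by_cases hg : c.blocks.getD i 0 = 1 <;> simp [hg, hi]
      _ = ∑ i ∈ range (q+1),
            if i < c.blocks.length ∧ c.blocks.getD i 0 = 1 then w c.blocks else 0 := by
          refine Finset.sum_subset (Finset.range_subset_range.mpr hle) fun i _ hi => ?_
          rw [Finset.mem_range] at hi
          exact if_neg fun hcond => hi hcond.1
  rw [Finset.sum_congr rfl fun c _ => h1 c]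
  rw [← Finset.sum_product' (univ : Finset (Composition (q+1))) (range (q+1))
        (fun c i => if i < c.blocks.length ∧ c.blocks.getD i 0 = 1 then w c.blocks else 0)]
  rw [← Finset.sum_filter
        (fun x : Composition (q+1) × ℕ => x.2 < x.1.blocks.length ∧ x.1.blocks.getD x.2 0 = 1)
        (fun x : Composition (q+1) × ℕ => w x.1.blocks)]
  exact sumD1 q

lemma getD_set_self' (l : List ℕ) (i a : ℕ) (h : i < l.length) :
    (l.set i a).getD i 0 = a := by
  rw [List.getD_eq_getElem _ _ (by simpa using h)]
  exact List.getElem_set_self _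

lemma set_getD_self (l : List ℕ) (i : ℕ) (h : i < l.length) :
    l.set i (l.getD i 0) = l := by
  rw [set_eq_insert_erase _ _ h]
  exact insertIdx_eraseIdx_self _ _ h

def decC {q : ℕ} (c : Composition (q+1)) (i : ℕ) (h : i < c.blocks.length)
    (h2 : 2 ≤ c.blocks.getD i 0) : Composition q :=
  ⟨c.blocks.set i (c.blocks.getD i 0 - 1),
   fun {x} hx => by
     rcases List.mem_or_eq_of_mem_set hx with hx | rfl
     · exact c.blocks_pos hx
     · omega,
   by
     have hs := sum_eraseIdx c.blocks i h
     rw [set_eq_insert_erase _ _ h,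
       sum_insertIdx' _ i (by rw [List.length_eraseIdx, if_pos h]; omega)]
     have := c.blocks_sum
     omega⟩

lemma decC_blocks {q : ℕ} (c : Composition (q+1)) (i : ℕ) (h : i < c.blocks.length)
    (h2 : 2 ≤ c.blocks.getD i 0) :
    (decC c i h h2).blocks = c.blocks.set i (c.blocks.getD i 0 - 1) := rfl

def incC {q : ℕ} (c : Composition q) (i : ℕ) (h : i < c.blocks.length) : Composition (q+1) :=
  ⟨c.blocks.set i (c.blocks.getD i 0 + 1),
   fun {x} hx => by
     rcases List.mem_or_eq_of_mem_set hx with hx | rfl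
     · exact c.blocks_pos hx
     · omega,
   by
     have hs := sum_eraseIdx c.blocks i h
     rw [set_eq_insert_erase _ _ h,
       sum_insertIdx' _ i (by rw [List.length_eraseIdx, if_pos h]; omega)]
     have := c.blocks_sum
     omega⟩

lemma incC_blocks {q : ℕ} (c : Composition q) (i : ℕ) (h : i < c.blocks.length) :
    (incC c i h).blocks = c.blocks.set i (c.blocks.getD i 0 + 1) := rfl

set_option maxHeartbeats 1000000 in
lemma sumB (q : ℕ) :
    ∑ x ∈ ((univ : Finset (Composition (q+1))) ×ˢ Finset.range (q+1)).filter
        (fun x : Composition (q+1) × ℕ =>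
          x.2 < x.1.blocks.length ∧ 2 ≤ x.1.blocks.getD x.2 0),
      (x.1.blocks.getD x.2 0 : ℝ) * w x.1.blocks
    = ∑ x ∈ ((univ : Finset (Composition q)) ×ˢ Finset.range (q+1)).filter
        (fun x : Composition q × ℕ => x.2 < x.1.blocks.length),
      (x.1.blocks.getD x.2 0 : ℝ) * w x.1.blocks := by
  classical
  refine Finset.sum_bij'
    (fun x hx => (decC x.1 x.2 ((Finset.mem_filter.mp hx).2).1 ((Finset.mem_filter.mp hx).2).2, x.2))
    (fun x hx => (incC x.1 x.2 ((Finset.mem_filter.mp hx).2), x.2)) ?_ ?_ ?_ ?_ ?_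
  · intro x hx
    obtain ⟨hmem, hcond⟩ := Finset.mem_filter.mp hx
    obtain ⟨-, hrange⟩ := Finset.mem_product.mp hmem
    refine Finset.mem_filter.mpr ⟨Finset.mem_product.mpr ⟨Finset.mem_univ _, hrange⟩, ?_⟩
    show x.2 < (decC x.1 x.2 hcond.1 hcond.2).blocks.length
    rw [decC_blocks, List.length_set]
    exact hcond.1
  · intro x hx
    obtain ⟨hmem, hcond⟩ := Finset.mem_filter.mp hx
    obtain ⟨-, hrange⟩ := Finset.mem_product.mp hmem
    refine Finset.mem_filter.mpr ⟨Finset.mem_product.mpr ⟨Finset.mem_univ _, hrange⟩, ?_, ?_⟩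
    · show x.2 < (incC x.1 x.2 hcond).blocks.length
      rw [incC_blocks, List.length_set]
      exact hcond
    · show 2 ≤ (incC x.1 x.2 hcond).blocks.getD x.2 0
      rw [incC_blocks, getD_set_self' _ _ _ hcond]
      have := getD_pos x.1 x.2 hcond
      omega
  · intro x hx
    obtain ⟨hmem, hcond⟩ := Finset.mem_filter.mp hx
    refine Prod.ext ?_ rfl
    refine Composition.ext ?_
    rw [incC_blocks, decC_blocks, getD_set_self' _ _ _ hcond.1, List.set_set]
    rw [show x.1.blocks.getD x.2 0 - 1 + 1 = x.1.blocks.getD x.2 0 by omega]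
    exact set_getD_self _ _ hcond.1
  · intro x hx
    obtain ⟨hmem, hcond⟩ := Finset.mem_filter.mp hx
    refine Prod.ext ?_ rfl
    refine Composition.ext ?_
    rw [decC_blocks, incC_blocks, getD_set_self' _ _ _ hcond, List.set_set]
    rw [show x.1.blocks.getD x.2 0 + 1 - 1 = x.1.blocks.getD x.2 0 by omega]
    exact set_getD_self _ _ hcond
  · intro x hx
    obtain ⟨hmem, hcond⟩ := Finset.mem_filter.mp hx
    obtain ⟨hi, hd2⟩ := hcond
    set l := x.1.blocks with hl
    set d := l.getD x.2 0 with hdd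
    have hbound : x.2 ≤ (l.eraseIdx x.2).length := by
      rw [List.length_eraseIdx, if_pos hi]; omega
    have hP1 : P l = (d : ℝ) * P (l.eraseIdx x.2) := P_eraseIdx l x.2 hi
    have hP2 : P (l.set x.2 (d - 1)) = ((d - 1 : ℕ) : ℝ) * P (l.eraseIdx x.2) := by
      rw [set_eq_insert_erase _ _ hi, P_insertIdx _ _ hbound]
    show (d : ℝ) * w l
        = ((l.set x.2 (d-1)).getD x.2 0 : ℝ) * w (l.set x.2 (d-1))
    rw [getD_set_self' _ _ _ hi]
    rw [w, w, List.length_set, hP1, hP2]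
    rw [cancel _ _ _ (Nat.cast_ne_zero.mpr (by omega : d ≠ 0) : (d:ℝ) ≠ 0)]
    rw [cancel _ _ _ (Nat.cast_ne_zero.mpr (by omega : d - 1 ≠ 0) : ((d-1:ℕ):ℝ) ≠ 0)]

lemma extend_range {n m : ℕ} (hle : m ≤ n) (g : ℕ → ℝ) :
    ∑ i ∈ Finset.range m, g i = ∑ i ∈ Finset.range n, if i < m then g i else 0 := by
  rw [← Finset.sum_subset (Finset.range_subset_range.mpr hle)
      (f := fun i => if i < m then g i else 0)
      (fun i _ hi => if_neg (by rw [Finset.mem_range] at hi; omega))]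
  exact Finset.sum_congr rfl fun i hi => (if_pos (Finset.mem_range.mp hi)).symm

set_option maxHeartbeats 1000000 in
lemma U_rec (q : ℕ) : ((q:ℝ)+1) * U (q+1) = ((q:ℝ) - 2) * U q := by
  classical
  have h1 : ∀ c : Composition (q+1), ((q:ℝ)+1) * w c.blocks
      = ∑ i ∈ Finset.range (q+1),
          if i < c.blocks.length then (c.blocks.getD i 0 : ℝ) * w c.blocks else 0 := by
    intro c
    have hle : c.blocks.length ≤ q + 1 := c.length_le
    have hs : ((q:ℝ)+1) = (c.blocks.sum : ℝ) := by rw [c.blocks_sum]; push_cast; ring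
    rw [hs, sum_getD c.blocks]
    push_cast
    rw [Finset.sum_mul]
    exact extend_range hle _
  have h1' : ∀ c : Composition q, (q:ℝ) * w c.blocks
      = ∑ i ∈ Finset.range (q+1),
          if i < c.blocks.length then (c.blocks.getD i 0 : ℝ) * w c.blocks else 0 := by
    intro c
    have hle : c.blocks.length ≤ q + 1 := le_trans c.length_le (by omega)
    have hs : ((q:ℝ)) = (c.blocks.sum : ℝ) := by rw [c.blocks_sum]
    rw [hs, sum_getD c.blocks]
    push_cast
    rw [Finset.sum_mul]
    exact extend_range hle _
  have lhs_eq : ((q:ℝ)+1) * U (q+1)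
      = ∑ x ∈ ((univ : Finset (Composition (q+1))) ×ˢ Finset.range (q+1)).filter
          (fun x : Composition (q+1) × ℕ => x.2 < x.1.blocks.length),
          (x.1.blocks.getD x.2 0 : ℝ) * w x.1.blocks := by
    rw [U, Finset.mul_sum]
    rw [Finset.sum_congr rfl fun c _ => h1 c]
    rw [← Finset.sum_product' (univ : Finset (Composition (q+1))) (Finset.range (q+1))
          (fun (c : Composition (q+1)) (i : ℕ) =>
            if i < c.blocks.length then (c.blocks.getD i 0 : ℝ) * w c.blocks else 0)]
    rw [← Finset.sum_filter (fun x : Composition (q+1) × ℕ => x.2 < x.1.blocks.length)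
          (fun x : Composition (q+1) × ℕ => (x.1.blocks.getD x.2 0 : ℝ) * w x.1.blocks)]
  have rhs_eq : (q:ℝ) * U q
      = ∑ x ∈ ((univ : Finset (Composition q)) ×ˢ Finset.range (q+1)).filter
          (fun x : Composition q × ℕ => x.2 < x.1.blocks.length),
          (x.1.blocks.getD x.2 0 : ℝ) * w x.1.blocks := by
    rw [U, Finset.mul_sum]
    rw [Finset.sum_congr rfl fun c _ => h1' c]
    rw [← Finset.sum_product' (univ : Finset (Composition q)) (Finset.range (q+1))
          (fun (c : Composition q) (i : ℕ) =>
            if i < c.blocks.length then (c.blocks.getD i 0 : ℝ) * w c.blocks else 0)]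
    rw [← Finset.sum_filter (fun x : Composition q × ℕ => x.2 < x.1.blocks.length)
          (fun x : Composition q × ℕ => (x.1.blocks.getD x.2 0 : ℝ) * w x.1.blocks)]
  have split := Finset.sum_filter_add_sum_filter_not
    (((univ : Finset (Composition (q+1))) ×ˢ Finset.range (q+1)).filter
      (fun x : Composition (q+1) × ℕ => x.2 < x.1.blocks.length))
    (fun x : Composition (q+1) × ℕ => x.1.blocks.getD x.2 0 = 1)
    (fun x : Composition (q+1) × ℕ => (x.1.blocks.getD x.2 0 : ℝ) * w x.1.blocks)
  rw [Finset.filter_filter, Finset.filter_filter] at split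
  have e1 : ∑ x ∈ ((univ : Finset (Composition (q+1))) ×ˢ Finset.range (q+1)).filter
      (fun x : Composition (q+1) × ℕ =>
        x.2 < x.1.blocks.length ∧ x.1.blocks.getD x.2 0 = 1),
      (x.1.blocks.getD x.2 0 : ℝ) * w x.1.blocks = -2 * U q := by
    rw [Finset.sum_congr rfl (fun x hx => by
      have h := (Finset.mem_filter.mp hx).2.2
      rw [h, Nat.cast_one, one_mul])]
    exact sumD1 q
  have e2 : ∑ x ∈ ((univ : Finset (Composition (q+1))) ×ˢ Finset.range (q+1)).filter
      (fun x : Composition (q+1) × ℕ =>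
        x.2 < x.1.blocks.length ∧ ¬ x.1.blocks.getD x.2 0 = 1),
      (x.1.blocks.getD x.2 0 : ℝ) * w x.1.blocks
      = ∑ x ∈ ((univ : Finset (Composition (q+1))) ×ˢ Finset.range (q+1)).filter
      (fun x : Composition (q+1) × ℕ =>
        x.2 < x.1.blocks.length ∧ 2 ≤ x.1.blocks.getD x.2 0),
      (x.1.blocks.getD x.2 0 : ℝ) * w x.1.blocks := by
    refine Finset.sum_congr (Finset.filter_congr fun x hx => ?_) (fun _ _ => rfl)
    constructor
    · rintro ⟨hA, hB⟩
      exact ⟨hA, by have := getD_pos x.1 x.2 hA; omega⟩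
    · rintro ⟨hA, hB⟩
      exact ⟨hA, by omega⟩
  rw [lhs_eq, ← split, e1, e2, sumB q, ← rhs_eq]
  ring

lemma U_zero : U 0 = 1 := by
  classical
  have hb : ∀ c : Composition 0, c.blocks = [] := by
    intro c
    cases h : c.blocks with
    | nil => rfl
    | cons a t =>
      exfalso
      have hpos := c.blocks_pos (h ▸ List.mem_cons_self (a := a) (l := t))
      have hsum := c.blocks_sum
      rw [h, List.sum_cons] at hsum
      omega
  have hcard : Fintype.card (Composition 0) = 1 :=
    Fintype.card_eq_one_iff.mpr
      ⟨Composition.ones 0, fun c => Composition.ext (by rw [hb c, hb (Composition.ones 0)])⟩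
  rw [U]
  rw [Finset.sum_congr rfl fun c _ =>
    (by rw [hb c, w]; simp [P_nil] : w c.blocks = 1)]
  rw [Finset.sum_const, nsmul_eq_mul, mul_one, Finset.card_univ, hcard, Nat.cast_one]

lemma U_one : U 1 = -2 := by
  have h := U_rec 0
  rw [U_zero] at h
  norm_num at h
  linarith

lemma U_two : U 2 = 1 := by
  have h := U_rec 1
  rw [U_one] at h
  norm_num at h
  linarith

lemma U_big : ∀ q, 3 ≤ q → U q = 0 := by
  intro q hq
  induction q, hq using Nat.le_induction with
  | base =>
    have h := U_rec 2
    rw [U_two] at h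
    norm_num at h
    linarith
  | succ n hn ih =>
    have h := U_rec n
    rw [ih] at h
    have hn' : ((n:ℝ)+1) ≠ 0 := by positivity
    have := mul_eq_zero.mp (by linarith : ((n:ℝ)+1) * U (n+1) = 0)
    tauto

end Stmt14

/-- For `p ≥ 1`,
`Σ_{k=1}^p ((-2)^k/k!) Σ_{j₁+⋯+j_k=p} n(j₁,…,j_k)/(j₁⋯j_k)` equals `-2, 4, -2, 0`
for `p = 1, 2, 3, ≥4` respectively, where `n(j₁,…,j_k)` counts the indices `i`
with `j_i = 1`.  The double sum is a sum over all compositions of `p`. -/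
theorem stmt14 (p : ℕ) (hp : 1 ≤ p) :
    (∑ c : Composition p,
        ((-2 : ℝ) ^ c.length / (Nat.factorial c.length : ℝ)) *
          ((c.blocks.count 1 : ℝ) / ((c.blocks.map (fun j : ℕ => (j : ℝ))).prod)))
      = if p = 1 then -2 else if p = 2 then 4 else if p = 3 then -2 else 0 := by
  classical
  obtain ⟨q, rfl⟩ : ∃ q, p = q + 1 := ⟨p - 1, by omega⟩
  have hrw : ∀ c : Composition (q+1),
      ((-2 : ℝ) ^ c.length / (Nat.factorial c.length : ℝ)) *
        ((c.blocks.count 1 : ℝ) / ((c.blocks.map (fun j : ℕ => (j : ℝ))).prod))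
      = (c.blocks.count 1 : ℝ) * Stmt14.w c.blocks := by
    intro c
    rw [Stmt14.w, Stmt14.P, Composition.blocks_length]
    ring
  rw [Finset.sum_congr rfl fun c _ => hrw c, Stmt14.sumA q]
  rcases q with _ | _ | _ | q
  · rw [Stmt14.U_zero]; norm_num
  · rw [Stmt14.U_one]; norm_num
  · rw [Stmt14.U_two]; norm_num
  · rw [Stmt14.U_big (q+3) (by omega)]
    rw [if_neg (by omega), if_neg (by omega), if_neg (by omega)]
    ring
end
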